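/- Let a, b, c, s be real numbers satisfying the three equations (a+b-1)s = (a-3)c + 2a, (a+b-1)a = (c-1)c, and (a-3)a = (c-3)s. Then c = s = a and ab = 0. -/
import Mathlib

/-- If reals `a, b, c, s` satisfy `(a+b-1)*s = (a-3)*c + 2*a`, `(a+b-1)*a = (c-1)*c`
and `(a-3)*a = (c-3)*s`, then `c = s = a` and `ab = 0`. -/
theorem polynomial_system_solution
    (a b c s : ℝ)
    (h1 : (a + b - 1) * s = (a - 3) * c + 2 * a)
    (h2 : (a + b - 1) * a = (c - 1) * c)
    (h3 : (a - 3) * a = (c - 3) * s) :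
    c = a ∧ s = a ∧ a * b = 0 := by
  have hcs : c * s = a ^ 2 := by
    linear_combination (a/2) * h1 - (s/2) * h2 + (c/2) * h3
  have hs : s = a := by
    linear_combination (1/3) * h3 + (1/3) * hcs
  have hfac : (c - a) * (c + 2) = 0 := by
    linear_combination h1 - h2 - (a + b - 1) * hs
  have hc : c = a := by
    rcases mul_eq_zero.mp hfac with h | h
    · linarith
    · have ha : a * (a + 2) = 0 := by linear_combination -hcs + s * h - 2 * hs
      rcases mul_eq_zero.mp ha with h0 | h0
      · exfalso; rw [h0] at h2; nlinarith
      · linarith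
  refine ⟨hc, hs, ?_⟩
  linear_combination h2 + (c + a - 1) * hc
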